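/- Let T be a 3×3 unitary matrix such that the traces of T and of each T·Sⱼ are sums of roots of unity and det(T) is a root of unity. If |T_{kl} T_{lk}| = 1/4 for off-diagonal entries (k ≠ l), then T_{kl} T_{lk} = ξ'/4 for some root of unity ξ'. -/

import Mathlib

open scoped ComplexConjugate

def IsRootOfUnity (z : ℂ) : Prop := ∃ n : ℕ, 0 < n ∧ z ^ n = 1

def IsSumOfRootsOfUnity (z : ℂ) : Prop :=
  ∃ (m : ℕ) (f : Fin m → ℂ), (∀ i, IsRootOfUnity (f i)) ∧ z = ∑ i, f i

lemma IsRootOfUnity.mul {z w : ℂ} (hz : IsRootOfUnity z) (hw : IsRootOfUnity w) :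
    IsRootOfUnity (z * w) := by
  obtain ⟨n, hn, hzn⟩ := hz; obtain ⟨m, hm, hwm⟩ := hw
  exact ⟨n * m, Nat.mul_pos hn hm, by
    rw [mul_pow, pow_mul, hzn, one_pow, mul_comm n m, pow_mul, hwm, one_pow, one_mul]⟩

lemma IsRootOfUnity.neg {z : ℂ} (hz : IsRootOfUnity z) : IsRootOfUnity (-z) := by
  obtain ⟨n, hn, h⟩ := hz
  exact ⟨2 * n, by positivity, by
    rw [pow_mul, neg_sq, ← pow_mul, mul_comm, pow_mul, h, one_pow]⟩

lemma IsRootOfUnity.conj {z : ℂ} (hz : IsRootOfUnity z) :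
    IsRootOfUnity ((starRingEnd ℂ) z) := by
  obtain ⟨n, hn, hzn⟩ := hz
  exact ⟨n, hn, by rw [← map_pow, hzn, map_one]⟩

lemma isSumOfRootsOfUnity_fintype {ι : Type} [Fintype ι] (f : ι → ℂ)
    (h : ∀ i, IsRootOfUnity (f i)) : IsSumOfRootsOfUnity (∑ i, f i) := by
  refine ⟨Fintype.card ι, f ∘ (Fintype.equivFin ι).symm, fun i => h _, ?_⟩
  exact (Equiv.sum_comp (Fintype.equivFin ι).symm f).symm

lemma IsSumOfRootsOfUnity.add {z w : ℂ} (hz : IsSumOfRootsOfUnity z)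
    (hw : IsSumOfRootsOfUnity w) : IsSumOfRootsOfUnity (z + w) := by
  obtain ⟨m, f, hf, rfl⟩ := hz; obtain ⟨m', g, hg, rfl⟩ := hw
  have hse := Fintype.sum_sum_type (Sum.elim f g)
  simp only [Sum.elim_inl, Sum.elim_inr] at hse
  rw [← hse]
  exact isSumOfRootsOfUnity_fintype _ (fun i => by cases i with
    | inl i => exact hf i
    | inr i => exact hg i)

lemma IsSumOfRootsOfUnity.mul {z w : ℂ} (hz : IsSumOfRootsOfUnity z)
    (hw : IsSumOfRootsOfUnity w) : IsSumOfRootsOfUnity (z * w) := by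
  obtain ⟨m, f, hf, rfl⟩ := hz; obtain ⟨m', g, hg, rfl⟩ := hw
  rw [Finset.sum_mul_sum, ← Fintype.sum_prod_type']
  exact isSumOfRootsOfUnity_fintype _ (fun p => (hf p.1).mul (hg p.2))

lemma IsSumOfRootsOfUnity.neg {z : ℂ} (hz : IsSumOfRootsOfUnity z) :
    IsSumOfRootsOfUnity (-z) := by
  obtain ⟨m, f, hf, rfl⟩ := hz
  rw [← Finset.sum_neg_distrib]
  exact isSumOfRootsOfUnity_fintype _ (fun i => (hf i).neg)

lemma IsSumOfRootsOfUnity.sub {z w : ℂ} (hz : IsSumOfRootsOfUnity z)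
    (hw : IsSumOfRootsOfUnity w) : IsSumOfRootsOfUnity (z - w) := by
  rw [sub_eq_add_neg]; exact hz.add hw.neg

lemma IsSumOfRootsOfUnity.conj {z : ℂ} (hz : IsSumOfRootsOfUnity z) :
    IsSumOfRootsOfUnity ((starRingEnd ℂ) z) := by
  obtain ⟨m, f, hf, rfl⟩ := hz
  rw [map_sum]
  exact isSumOfRootsOfUnity_fintype _ (fun i => (hf i).conj)

lemma IsRootOfUnity.isSum {z : ℂ} (hz : IsRootOfUnity z) : IsSumOfRootsOfUnity z := by
  refine ⟨1, fun _ => z, fun _ => hz, by simp⟩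

lemma krn (z : ℂ) (m : ℕ) (f : Fin m → ℂ) (n : Fin m → ℕ) (hn : ∀ i, 0 < n i)
    (hfn : ∀ i, f i ^ n i = 1) (hzf : z = ∑ i, f i)
    (habs : ‖z‖ = 1) : ∃ nn : ℕ, 0 < nn ∧ z ^ nn = 1 := by
  set N : ℕ := ∏ i, n i with hNdef
  have hN0 : 0 < N := Finset.prod_pos (fun i _ => hn i)
  haveI : NeZero N := ⟨hN0.ne'⟩
  have hfN : ∀ i, f i ^ N = 1 := fun i => by
    obtain ⟨c, hc⟩ := Finset.dvd_prod_of_mem n (Finset.mem_univ i)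
    rw [hNdef, hc, pow_mul, hfn i, one_pow]
  set Np : ℕ+ := ⟨N, hN0⟩ with hNp
  set K := CyclotomicField N ℚ with hK
  haveI : IsCyclotomicExtension {N} ℚ K :=
    haveI : NeZero (N : ℚ) := ⟨by exact_mod_cast hN0.ne'⟩
    CyclotomicField.isCyclotomicExtension N ℚ
  haveI : NumberField K := IsCyclotomicExtension.numberField {N} ℚ K
  set ζ : K := IsCyclotomicExtension.zeta N ℚ K with hzeta
  have hζ : IsPrimitiveRoot ζ N := IsCyclotomicExtension.zeta_spec N ℚ K
  -- embedding into ℂ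
  let φ₀ : K →+* ℂ := (IsAlgClosed.lift (R := ℚ) (M := ℂ)).toRingHom
  -- image of ζ is a primitive root in ℂ
  have hinj : Function.Injective φ₀ := φ₀.injective
  have hη : IsPrimitiveRoot (φ₀ ζ) N := hζ.map_of_injective hinj
  -- each f i is a power of φ₀ ζ
  have hpow : ∀ i, ∃ e < N, (φ₀ ζ) ^ e = f i := fun i => hη.eq_pow_of_pow_eq_one (hfN i)
  choose e he hfe using hpow
  set w : K := ∑ i, ζ ^ e i with hw
  set w' : K := ∑ i, ζ ^ (N - e i) with hw'
  have hφw : ∀ φ : K →+* ℂ, conj (φ w) = φ w' := by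
    intro φ
    have hφζ : IsPrimitiveRoot (φ ζ) N := hζ.map_of_injective φ.injective
    have hζN : (φ ζ) ^ N = 1 := hφζ.pow_eq_one
    have habsζ : ‖φ ζ‖ = 1 := by
      have := Complex.norm_eq_one_of_pow_eq_one hζN hN0.ne'
      simpa using this
    have hne : φ ζ ≠ 0 := hφζ.ne_zero hN0.ne'
    have hconjζ : conj (φ ζ) = (φ ζ) ^ (N - 1) := by
      have h1 : φ ζ * conj (φ ζ) = 1 := by
        rw [Complex.mul_conj]
        norm_cast
        simp [Complex.normSq_eq_norm_sq, habsζ]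
      have h2 : φ ζ * (φ ζ) ^ (N - 1) = 1 := by
        rw [← pow_succ', Nat.sub_add_cancel hN0, hζN]
      exact mul_left_cancel₀ hne (h1.trans h2.symm)
    rw [hw, hw', map_sum, map_sum, map_sum]
    refine Finset.sum_congr rfl (fun i _ => ?_)
    rw [map_pow, map_pow, map_pow, hconjζ, ← pow_mul]
    have hA : (φ ζ) ^ ((N - 1) * e i) * (φ ζ) ^ (e i) = 1 := by
      rw [← pow_add]
      have hkey : (N - 1) * e i + e i = N * e i := by
        conv_rhs => rw [← Nat.sub_add_cancel (show 1 ≤ N from hN0), add_mul, one_mul]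
      rw [hkey, pow_mul, hζN, one_pow]
    have hB : (φ ζ) ^ (N - e i) * (φ ζ) ^ (e i) = 1 := by
      rw [← pow_add, Nat.sub_add_cancel (he i).le, hζN]
    exact mul_right_cancel₀ (pow_ne_zero _ hne) (hA.trans hB.symm)
  have hφ₀w : φ₀ w = z := by
    rw [hw, map_sum, hzf]
    exact Finset.sum_congr rfl (fun i _ => by rw [map_pow, hfe])
  -- w * w' = 1
  have hww' : w * w' = 1 := by
    apply hinj
    rw [map_mul, map_one, hφ₀w, ← hφw φ₀, hφ₀w, Complex.mul_conj]
    norm_cast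
    simp [Complex.normSq_eq_norm_sq, habs]
  -- all embeddings have norm 1
  have hnorm : ∀ φ : K →+* ℂ, ‖φ w‖ = 1 := by
    intro φ
    have : φ w * conj (φ w) = 1 := by
      rw [hφw φ, ← map_mul, hww', map_one]
    rw [Complex.mul_conj] at this
    norm_cast at this
    rw [Complex.normSq_eq_norm_sq] at this
    have h0 : (0:ℝ) ≤ ‖φ w‖ := norm_nonneg _
    nlinarith [this]
  -- w is an algebraic integer
  have hint : IsIntegral ℤ w := by
    refine IsIntegral.sum _ (fun i _ => IsIntegral.pow ?_ _)
    have : IsIntegral ℤ (ζ ^ N) := by rw [hζ.pow_eq_one]; exact isIntegral_one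
    exact this.of_pow hN0
  obtain ⟨nn, hnn, hwnn⟩ := NumberField.Embeddings.pow_eq_one_of_norm_eq_one K ℂ hint hnorm
  exact ⟨nn, hnn, by rw [← hφ₀w, ← map_pow, hwnn, map_one]⟩

lemma isRootOfUnity_of_isSum_abs_one {z : ℂ} (hz : IsSumOfRootsOfUnity z)
    (habs : ‖z‖ = 1) : IsRootOfUnity z := by
  obtain ⟨m, f, hf, rfl⟩ := hz
  choose n hn hfn using hf
  exact krn _ m f n hn hfn rfl habs

lemma IsSumOfRootsOfUnity.two_mul {z : ℂ} (hz : IsSumOfRootsOfUnity z) :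
    IsSumOfRootsOfUnity (2 * z) := by
  rw [_root_.two_mul]; exact hz.add hz

def S (j : Fin 3) : Matrix (Fin 3) (Fin 3) ℂ :=
  Matrix.diagonal (fun k => if k = j then 1 else -1)

theorem stmt10 (T : Matrix (Fin 3) (Fin 3) ℂ) (hT : T ∈ Matrix.unitaryGroup (Fin 3) ℂ)
    (htr : IsSumOfRootsOfUnity (Matrix.trace T))
    (htrS : ∀ j : Fin 3, IsSumOfRootsOfUnity (Matrix.trace (T * S j)))
    (hdet : IsRootOfUnity T.det)
    (k l : Fin 3) (hkl : k ≠ l)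
    (habs : ‖T k l * T l k‖ = 1 / 4) :
    ∃ ξ : ℂ, IsRootOfUnity ξ ∧ T k l * T l k = ξ / 4 := by
  obtain ⟨hu1, hu2⟩ := (Unitary.mem_iff).mp hT
  -- 2 * T j j is a sum of roots of unity
  have htrace : ∀ j : Fin 3, Matrix.trace T + Matrix.trace (T * S j) = 2 * T j j := by
    intro j
    have hS : Matrix.trace (T * S j) = ∑ i, T i i * (if i = j then 1 else -1) := by
      simp [Matrix.trace, Matrix.diag, S, Matrix.mul_diagonal]
    rw [hS, Matrix.trace]
    fin_cases j <;> simp [Fin.sum_univ_three, Matrix.diag] <;> ring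
  have h2 : ∀ j : Fin 3, IsSumOfRootsOfUnity (2 * T j j) := fun j => by
    rw [← htrace j]; exact htr.add (htrS j)
  -- adjugate T = det T • star T
  have hadj : Matrix.adjugate T = T.det • star T := by
    calc Matrix.adjugate T = (star T * T) * Matrix.adjugate T := by rw [hu1, one_mul]
      _ = star T * (T * Matrix.adjugate T) := by rw [Matrix.mul_assoc]
      _ = star T * (T.det • 1) := by rw [Matrix.mul_adjugate]
      _ = T.det • star T := by rw [Matrix.mul_smul, Matrix.mul_one]
  have hadj' : ∀ j : Fin 3, T.det * conj (T j j) = Matrix.adjugate T j j := by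
    intro j
    rw [hadj]
    simp [Matrix.smul_apply, Matrix.star_apply]
  -- key identity via the third index
  have hex : ∀ k l : Fin 3, k ≠ l → ∃ j : Fin 3, j ≠ k ∧ j ≠ l := by decide
  obtain ⟨j, hjk, hjl⟩ := hex k l hkl
  have hj : T k k * T l l - T k l * T l k = T.det * conj (T j j) := by
    rw [hadj' j, Matrix.adjugate_fin_three]
    fin_cases j <;> fin_cases k <;> fin_cases l <;> simp_all <;> ring
  set z : ℂ := 4 * (T k l * T l k) with hz
  have habsz : ‖z‖ = 1 := by
    rw [hz, norm_mul, habs]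
    norm_num
  have hzsum : IsSumOfRootsOfUnity z := by
    have : z = (2 * T k k) * (2 * T l l) - 2 * (T.det * conj (2 * T j j)) := by
      have h2c : conj ((2 : ℂ) * T j j) = 2 * conj (T j j) := by
        rw [map_mul, Complex.conj_ofNat]
      rw [hz, h2c]
      linear_combination -4 * hj
    rw [this]
    exact ((h2 k).mul (h2 l)).sub ((hdet.isSum.mul (h2 j).conj).two_mul)
  have hroot : IsRootOfUnity z := isRootOfUnity_of_isSum_abs_one hzsum habsz
  exact ⟨z, hroot, by rw [hz]; ring⟩
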